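/- Let K_{n₁,n₂,...,n_k} be the complete k-partite graph with parts of sizes n₁, n₂, ..., n_k, and let X be the k×k symmetric matrix whose diagonal entries are all zero and whose (i,j) entry for i ≠ j is √(n_i n_j). Then the spectrum of K_{n₁,n₂,...,n_k} equals the spectrum of X together with the eigenvalue 0 with multiplicity n₁+...+n_k − k, and hence E(K_{n₁,n₂,...,n_k}) = E(X). -/

import Mathlib

open Matrix Polynomial SimpleGraph

/-- The energy of a real square matrix: the sum of the absolute values of its
eigenvalues (roots of the characteristic polynomial), with multiplicity. -/
noncomputable def energy {ι : Type*} [Fintype ι] [DecidableEq ι]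
    (M : Matrix ι ι ℝ) : ℝ :=
  (M.charpoly.roots.map fun x => |x|).sum

namespace Stmt14Aux

/-- charpoly is invariant under conjugation. -/
lemma charpoly_conj {ι R : Type*} [Fintype ι] [DecidableEq ι] [CommRing R]
    (P Q M : Matrix ι ι R) (h1 : P * Q = 1) :
    (P * M * Q).charpoly = M.charpoly := by
  have hmap : P.map (C : R →+* R[X]) * Q.map (C : R →+* R[X]) = 1 := by
    rw [← Matrix.map_mul, h1]
    ext i j
    by_cases h : i = j <;> simp [h, Matrix.one_apply]
  have hscalar : (Matrix.scalar ι (X : R[X])) = (X : R[X]) • (1 : Matrix ι ι R[X]) := by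
    ext i j
    by_cases h : i = j <;> simp [h, Matrix.scalar_apply, Matrix.diagonal_apply,
      Matrix.one_apply]
  have key : charmatrix (P * M * Q) =
      P.map (C : R →+* R[X]) * charmatrix M * Q.map (C : R →+* R[X]) := by
    unfold charmatrix
    rw [Matrix.mul_sub, Matrix.sub_mul]
    congr 1
    · rw [hscalar, mul_smul_comm, smul_mul_assoc, Matrix.mul_one, hmap]
    · simp only [RingHom.mapMatrix_apply, Matrix.map_mul]
  rw [Matrix.charpoly, Matrix.charpoly, key, det_mul, det_mul,
    mul_comm ((P.map (C : R →+* R[X])).det), mul_assoc, ← det_mul, hmap, det_one, mul_one]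

lemma charpoly_zero {ι R : Type*} [Fintype ι] [DecidableEq ι] [CommRing R] :
    (0 : Matrix ι ι R).charpoly = X ^ Fintype.card ι := by
  have : charmatrix (0 : Matrix ι ι R) = Matrix.diagonal fun _ => (X : R[X]) := by
    ext i j
    by_cases h : i = j <;> simp [h]
  rw [Matrix.charpoly, this, det_diagonal, Finset.prod_const, Finset.card_univ]

variable {k : ℕ} (n : Fin k → ℕ)

/-- The quotient matrix. -/
def Y : Matrix (Fin k) (Fin k) ℝ :=
  Matrix.of fun i j => if i = j then 0 else ((n i : ℝ) + 1)

def Bm : Matrix (Fin k) (Σ j : Fin k, Fin (n j)) ℝ :=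
  Matrix.of fun i w => if i = w.1 then -1 else 0

def Cm : Matrix (Σ j : Fin k, Fin (n j)) (Fin k) ℝ :=
  Matrix.of fun w j => if w.1 = j then 0 else 1

def eqv : (Fin k ⊕ Σ j : Fin k, Fin (n j)) ≃ (Σ j : Fin k, Fin (n j + 1)) where
  toFun := Sum.elim (fun j => ⟨j, 0⟩) (fun w => ⟨w.1, w.2.succ⟩)
  invFun v := if h : v.2 = 0 then Sum.inl v.1 else Sum.inr ⟨v.1, v.2.pred h⟩
  left_inv := by
    rintro (j | ⟨j, m⟩) <;> simp [Fin.succ_ne_zero]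
    · split_ifs with h
      · rfl
      · exact absurd rfl h
    · split_ifs with h
      · exact absurd h (Fin.succ_ne_zero m)
      · rfl
  right_inv := by
    rintro ⟨j, i⟩
    by_cases h : i = 0 <;> simp [h]

lemma sum_BC : Bm n * Cm n = Matrix.of fun i j => if i = j then 0 else -(n i : ℝ) := by
  ext i j
  rw [Matrix.mul_apply, ← Finset.univ_sigma_univ, Finset.sum_sigma]
  rw [Finset.sum_eq_single i (fun l _ hl => by simp [Bm, Cm, if_neg (Ne.symm hl)])
    (fun h => absurd (Finset.mem_univ i) h)]
  by_cases h : i = j <;> simp [Bm, Cm, h, Finset.sum_const, Finset.card_univ]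

lemma O1B : (Matrix.of fun i j : Fin k => if i = j then (0 : ℝ) else 1) * Bm n
    = Matrix.of fun i w => if i = w.1 then 0 else -1 := by
  ext i w
  rw [Matrix.mul_apply]
  rw [Finset.sum_eq_single w.1 (fun l _ hl => by simp [Bm, if_neg hl])
    (fun h => absurd (Finset.mem_univ w.1) h)]
  by_cases h : i = w.1 <;> simp [Bm, h]

lemma CB : Cm n * Bm n = Matrix.of fun w w' => if w.1 = w'.1 then (0 : ℝ) else -1 := by
  ext w w'
  rw [Matrix.mul_apply]
  rw [Finset.sum_eq_single w'.1 (fun l _ hl => by simp [Bm, if_neg hl])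
    (fun h => absurd (Finset.mem_univ w'.1) h)]
  by_cases h : w.1 = w'.1 <;> simp [Cm, Bm, h]

lemma adj_charpoly
    [inst : DecidableRel (completeMultipartiteGraph fun j : Fin k => Fin (n j + 1)).Adj] :
    ((completeMultipartiteGraph fun j : Fin k => Fin (n j + 1)).adjMatrix ℝ).charpoly
      = (Y n).charpoly * X ^ (∑ j, n j) := by
  classical
  set A := ((completeMultipartiteGraph fun j : Fin k => Fin (n j + 1)).adjMatrix ℝ) with hA
  set A' := Matrix.reindex (eqv n).symm (eqv n).symm A with hA'
  have h0 : A.charpoly = A'.charpoly := (Matrix.charpoly_reindex _ _).symm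
  set P : Matrix (Fin k ⊕ Σ j : Fin k, Fin (n j)) (Fin k ⊕ Σ j : Fin k, Fin (n j)) ℝ :=
    Matrix.fromBlocks 1 (Bm n) 0 1 with hP
  set Q : Matrix (Fin k ⊕ Σ j : Fin k, Fin (n j)) (Fin k ⊕ Σ j : Fin k, Fin (n j)) ℝ :=
    Matrix.fromBlocks 1 (-(Bm n)) 0 1 with hQ
  set M : Matrix (Fin k ⊕ Σ j : Fin k, Fin (n j)) (Fin k ⊕ Σ j : Fin k, Fin (n j)) ℝ :=
    Matrix.fromBlocks (Y n) 0 (Cm n) 0 with hM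
  have hPQ : P * Q = 1 := by
    rw [hP, hQ, Matrix.fromBlocks_multiply]
    simp [← Matrix.fromBlocks_one]
  have hconj : A' = P * M * Q := by
    have hO1 : Y n + Bm n * Cm n
        = Matrix.of fun i j : Fin k => if i = j then (0 : ℝ) else 1 := by
      rw [sum_BC]
      ext i j
      by_cases h : i = j <;> simp [Y, h]
    rw [hP, hQ, hM, Matrix.fromBlocks_multiply, Matrix.fromBlocks_multiply]
    simp only [Matrix.one_mul, Matrix.mul_one, Matrix.zero_mul, Matrix.mul_zero,
      add_zero, zero_add, Matrix.mul_neg]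
    rw [hO1, O1B, CB]
    ext u v
    rcases u with i | w <;> rcases v with j | w' <;>
      · simp only [hA', hA, Matrix.reindex_apply, Matrix.submatrix_apply, Equiv.symm_symm,
          SimpleGraph.adjMatrix_apply, comap_adj, top_adj, eqv, Equiv.coe_fn_mk,
          Sum.elim_inl, Sum.elim_inr, Matrix.fromBlocks_apply₁₁, Matrix.fromBlocks_apply₁₂,
          Matrix.fromBlocks_apply₂₁, Matrix.fromBlocks_apply₂₂, Matrix.of_apply,
          Matrix.neg_apply]
        split_ifs <;> simp_all [Cm]
  rw [h0, hconj, charpoly_conj _ _ _ hPQ, hM, Matrix.charpoly_fromBlocks_zero₁₂,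
    charpoly_zero]
  congr 1
  rw [Fintype.card_sigma]
  simp

end Stmt14Aux

/-- Spectrum and energy of the complete multipartite graph `K_{n₁,…,n_k}`. -/
theorem stmt_14 (k : ℕ) (n : Fin k → ℕ)
    [inst : DecidableRel (completeMultipartiteGraph fun j : Fin k => Fin (n j + 1)).Adj]
    (X : Matrix (Fin k) (Fin k) ℝ)
    (hX : ∀ p q : Fin k, X p q =
      if p = q then 0 else Real.sqrt ((n p + 1) * (n q + 1))) :
    ((completeMultipartiteGraph fun j : Fin k => Fin (n j + 1)).adjMatrix ℝ).charpoly.roots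
      = X.charpoly.roots + Multiset.replicate (∑ j, n j) 0
    ∧ energy ((completeMultipartiteGraph fun j : Fin k => Fin (n j + 1)).adjMatrix ℝ)
      = energy X := by
  classical
  have hsqrt : ∀ j : Fin k, Real.sqrt ((n j : ℝ) + 1) ≠ 0 := fun j => by
    positivity
  have hXY : X.charpoly = (Stmt14Aux.Y n).charpoly := by
    have hD : (Matrix.diagonal fun j : Fin k => (Real.sqrt ((n j : ℝ) + 1))⁻¹) *
        (Matrix.diagonal fun j : Fin k => Real.sqrt ((n j : ℝ) + 1)) = 1 := by
      rw [Matrix.diagonal_mul_diagonal]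
      have : (fun i : Fin k => (Real.sqrt ((n i : ℝ) + 1))⁻¹ * Real.sqrt ((n i : ℝ) + 1))
          = fun _ => (1 : ℝ) := funext fun i => inv_mul_cancel₀ (hsqrt i)
      rw [this, Matrix.diagonal_one]
    have hXfact : X = (Matrix.diagonal fun j : Fin k => (Real.sqrt ((n j : ℝ) + 1))⁻¹) *
        (Stmt14Aux.Y n) * (Matrix.diagonal fun j : Fin k => Real.sqrt ((n j : ℝ) + 1)) := by
      ext p q
      rw [Matrix.mul_diagonal, Matrix.diagonal_mul, hX]
      by_cases h : p = q
      · simp [Stmt14Aux.Y, h]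
      · simp only [Stmt14Aux.Y, Matrix.of_apply, if_neg h]
        rw [Real.sqrt_mul (by positivity)]
        have hkey : (Real.sqrt ((n p : ℝ) + 1))⁻¹ * ((n p : ℝ) + 1)
            = Real.sqrt ((n p : ℝ) + 1) := by
          rw [← div_eq_inv_mul, Real.div_sqrt]
        rw [hkey]
    rw [hXfact, Stmt14Aux.charpoly_conj _ _ _ hD]
  have hchar := Stmt14Aux.adj_charpoly n
  have hroots :
      ((completeMultipartiteGraph fun j : Fin k => Fin (n j + 1)).adjMatrix ℝ).charpoly.roots
        = X.charpoly.roots + Multiset.replicate (∑ j, n j) 0 := by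
    rw [hchar, hXY]
    rw [Polynomial.roots_mul (mul_ne_zero (Stmt14Aux.Y n).charpoly_monic.ne_zero
      (pow_ne_zero _ Polynomial.X_ne_zero))]
    rw [Polynomial.roots_pow, Polynomial.roots_X, Multiset.nsmul_singleton]
  refine ⟨hroots, ?_⟩
  unfold energy
  rw [hroots, Multiset.map_add, Multiset.sum_add, Multiset.map_replicate]
  simp
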